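/- arXiv:1309.6301 — 3 statements merged into one kernel-verified Lean document; each statement's English description precedes it below -/
import Mathlib

section
/- For any x ∈ ℝⁿ, if x̃ is obtained by sorting the components of x in decreasing order of magnitude (|x̃₁| ≥ |x̃₂| ≥ … ≥ |x̃ₙ|), then the OSCAR regularizer satisfies r(x) = Σᵢ wᵢ|x̃ᵢ| where wᵢ = λ₁ + λ₂(n − i). -/
open Finset

/-- The OSCAR regularizer r(x) = λ₁‖x‖₁ + λ₂ ∑_{i<j} max{|xᵢ|,|xⱼ|} on ℝⁿ. -/
noncomputable def oscar (n : ℕ) (l1 l2 : ℝ) (x : Fin n → ℝ) : ℝ :=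
  l1 * ∑ i, |x i| +
  l2 * ∑ p ∈ Finset.univ.filter (fun p : Fin n × Fin n => p.1 < p.2), max |x p.1| |x p.2|

lemma sum_ne_pairs {n : ℕ} (g : Fin n → Fin n → ℝ) (hsymm : ∀ i j, g i j = g j i) :
    ∑ p ∈ Finset.univ.filter (fun p : Fin n × Fin n => p.1 ≠ p.2), g p.1 p.2
      = 2 * ∑ p ∈ Finset.univ.filter (fun p : Fin n × Fin n => p.1 < p.2), g p.1 p.2 := by
  rw [← Finset.sum_filter_add_sum_filter_not
      (Finset.univ.filter (fun p : Fin n × Fin n => p.1 ≠ p.2)) (fun p => p.1 < p.2)]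
  have e1 : (Finset.univ.filter (fun p : Fin n × Fin n => p.1 ≠ p.2)).filter
      (fun p => p.1 < p.2) = Finset.univ.filter (fun p : Fin n × Fin n => p.1 < p.2) := by
    ext p; simp only [Finset.mem_filter, Finset.mem_univ, true_and]
    exact ⟨fun h => h.2, fun h => ⟨ne_of_lt h, h⟩⟩
  have e2 : (Finset.univ.filter (fun p : Fin n × Fin n => p.1 ≠ p.2)).filter
      (fun p => ¬ p.1 < p.2) = Finset.univ.filter (fun p : Fin n × Fin n => p.2 < p.1) := by
    ext p; simp only [Finset.mem_filter, Finset.mem_univ, true_and, not_lt]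
    constructor
    · rintro ⟨hne, hle⟩; exact lt_of_le_of_ne hle (fun h => hne h.symm)
    · intro h; exact ⟨(ne_of_lt h).symm, le_of_lt h⟩
  rw [e1, e2]
  have swap : ∑ p ∈ Finset.univ.filter (fun p : Fin n × Fin n => p.2 < p.1), g p.1 p.2
      = ∑ p ∈ Finset.univ.filter (fun p : Fin n × Fin n => p.1 < p.2), g p.1 p.2 := by
    refine Finset.sum_nbij' (fun p => (p.2, p.1)) (fun p => (p.2, p.1)) ?_ ?_ ?_ ?_ ?_ <;>
      simp [hsymm]
  rw [swap]; ring

/-- OSCAR equals a weighted sorted ℓ₁ norm with weights wᵢ = λ₁ + λ₂(n − i) (1-indexed). -/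
theorem oscar_eq_weighted_sorted_l1 (n : ℕ) (l1 l2 : ℝ) (h1 : 0 ≤ l1) (h2 : 0 ≤ l2)
    (x : Fin n → ℝ) (σ : Equiv.Perm (Fin n))
    (hsorted : ∀ i j : Fin n, i ≤ j → |x (σ j)| ≤ |x (σ i)|) :
    oscar n l1 l2 x = ∑ i : Fin n, (l1 + l2 * ((n : ℝ) - 1 - (i : ℕ))) * |x (σ i)| := by
  set y : Fin n → ℝ := fun i => |x (σ i)| with hy
  -- permute the pair sum over the ≠-pairs
  have hperm : ∑ p ∈ Finset.univ.filter (fun p : Fin n × Fin n => p.1 ≠ p.2), max |x p.1| |x p.2|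
      = ∑ p ∈ Finset.univ.filter (fun p : Fin n × Fin n => p.1 ≠ p.2), max (y p.1) (y p.2) := by
    refine Finset.sum_nbij' (fun p => (σ.symm p.1, σ.symm p.2)) (fun p => (σ p.1, σ p.2))
      ?_ ?_ ?_ ?_ ?_ <;> simp [hy]
  have key : ∑ p ∈ Finset.univ.filter (fun p : Fin n × Fin n => p.1 < p.2), max |x p.1| |x p.2|
      = ∑ p ∈ Finset.univ.filter (fun p : Fin n × Fin n => p.1 < p.2), max (y p.1) (y p.2) := by
    have h1' := sum_ne_pairs (fun i j => max |x i| |x j|) (fun i j => max_comm _ _)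
    have h2' := sum_ne_pairs (fun i j => max (y i) (y j)) (fun i j => max_comm _ _)
    have := hperm
    rw [h1', h2'] at this
    linarith
  -- on sorted pairs, the max is the first entry
  have key2 : ∑ p ∈ Finset.univ.filter (fun p : Fin n × Fin n => p.1 < p.2), max (y p.1) (y p.2)
      = ∑ p ∈ Finset.univ.filter (fun p : Fin n × Fin n => p.1 < p.2), y p.1 := by
    refine Finset.sum_congr rfl ?_
    intro p hp
    simp only [Finset.mem_filter] at hp
    exact max_eq_left (hsorted p.1 p.2 (le_of_lt hp.2))
  -- count the pairs
  have key3 : ∑ p ∈ Finset.univ.filter (fun p : Fin n × Fin n => p.1 < p.2), y p.1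
      = ∑ i : Fin n, ((n : ℝ) - 1 - (i : ℕ)) * y i := by
    rw [Finset.sum_filter, Fintype.sum_prod_type]
    refine Finset.sum_congr rfl ?_
    intro i _
    show (∑ j : Fin n, if i < j then y i else 0) = _
    rw [← Finset.sum_filter]
    have hcard : (Finset.univ.filter (fun j : Fin n => i < j)) = Finset.Ioi i := by
      ext j; simp
    rw [Finset.sum_const, hcard, Fin.card_Ioi, nsmul_eq_mul]
    congr 1
    have hi : (i : ℕ) < n := i.isLt
    rw [Nat.cast_sub (by omega : (i : ℕ) ≤ n - 1), Nat.cast_sub (by omega : 1 ≤ n)]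
    simp
  have hl1 : ∑ i, |x i| = ∑ i, y i := (Equiv.sum_comp σ (fun i => |x i|)).symm
  rw [oscar, hl1, key, key2, key3, Finset.mul_sum, Finset.mul_sum, ← Finset.sum_add_distrib]
  refine Finset.sum_congr rfl ?_
  intro i _
  ring
end

section
/- Let ṽ ∈ ℝⁿ satisfy |ṽ₁| ≥ |ṽ₂| ≥ … ≥ |ṽₙ| ≥ 0 with ṽᵢ ≥ 0, and let b be the unique minimizer of r(x) + (1/2)‖x − ṽ‖₂² over x ∈ ℝⁿ with r the OSCAR regularizer. Then b₁ ≥ b₂ ≥ … ≥ bₙ ≥ 0; moreover if ṽ_p = ṽ_q for some p, q then b_p = b_q. -/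
open Finset

section Aux

variable {n : ℕ}

private lemma pairSum_half (f : Fin n → ℝ) :
    ∑ p ∈ Finset.univ.filter (fun p : Fin n × Fin n => p.1 < p.2), max (f p.1) (f p.2) =
      (∑ p ∈ Finset.univ.filter (fun p : Fin n × Fin n => p.1 ≠ p.2),
        max (f p.1) (f p.2)) / 2 := by
  set T := Finset.univ.filter (fun p : Fin n × Fin n => p.1 < p.2) with hT
  set T' := Finset.univ.filter (fun p : Fin n × Fin n => p.2 < p.1) with hT'
  have hU : Finset.univ.filter (fun p : Fin n × Fin n => p.1 ≠ p.2) = T ∪ T' := by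
    ext p
    simp only [hT, hT', Finset.mem_filter, Finset.mem_union, Finset.mem_univ, true_and]
    constructor
    · exact fun h => lt_or_gt_of_ne h
    · rintro (h | h)
      exacts [h.ne, h.ne']
  have hdisj : Disjoint T T' := by
    rw [Finset.disjoint_left]
    intro p hp hp'
    simp only [hT, hT', Finset.mem_filter] at hp hp'
    exact absurd hp'.2 (not_lt_of_gt hp.2)
  have hswap : ∑ p ∈ T', max (f p.1) (f p.2) = ∑ p ∈ T, max (f p.1) (f p.2) := by
    refine Finset.sum_nbij' Prod.swap Prod.swap ?_ ?_ ?_ ?_ ?_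
    · intro p hp; simp only [hT, hT', Finset.mem_filter] at *; exact ⟨Finset.mem_univ _, hp.2⟩
    · intro p hp; simp only [hT, hT', Finset.mem_filter] at *; exact ⟨Finset.mem_univ _, hp.2⟩
    · intro p _; rfl
    · intro p _; rfl
    · intro p _; simp [max_comm]
  rw [hU, Finset.sum_union hdisj, hswap]
  ring

private lemma pairSum_comp (σ : Equiv.Perm (Fin n)) (f : Fin n → ℝ) :
    ∑ p ∈ Finset.univ.filter (fun p : Fin n × Fin n => p.1 < p.2),
        max (f (σ p.1)) (f (σ p.2)) =
      ∑ p ∈ Finset.univ.filter (fun p : Fin n × Fin n => p.1 < p.2),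
        max (f p.1) (f p.2) := by
  rw [pairSum_half (fun i => f (σ i)), pairSum_half f]
  congr 1
  refine Finset.sum_nbij' (fun p => (σ p.1, σ p.2)) (fun p => (σ.symm p.1, σ.symm p.2))
    ?_ ?_ ?_ ?_ ?_
  · intro p hp; simp only [Finset.mem_filter, Finset.mem_univ, true_and] at *
    simpa using hp
  · intro p hp; simp only [Finset.mem_filter, Finset.mem_univ, true_and] at *
    simpa using hp
  · intro p _; simp
  · intro p _; simp
  · intro p _; rfl

private lemma oscar_comp (n : ℕ) (l1 l2 : ℝ) (σ : Equiv.Perm (Fin n)) (x : Fin n → ℝ) :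
    oscar n l1 l2 (x ∘ σ) = oscar n l1 l2 x := by
  unfold oscar
  have h1 : ∑ i, |(x ∘ σ) i| = ∑ i, |x i| := Equiv.sum_comp σ (fun i => |x i|)
  have h2 := pairSum_comp σ (fun i => |x i|)
  simp only [Function.comp] at h1 h2 ⊢
  rw [h1, h2]

private lemma oscar_abs (n : ℕ) (l1 l2 : ℝ) (x : Fin n → ℝ) :
    oscar n l1 l2 (fun i => |x i|) = oscar n l1 l2 x := by
  simp [oscar, abs_abs]

private lemma oscar_midpoint (n : ℕ) (l1 l2 : ℝ) (h1 : 0 ≤ l1) (h2 : 0 ≤ l2)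
    (bf cf : Fin n → ℝ) :
    oscar n l1 l2 (fun i => (bf i + cf i) / 2) ≤
      (oscar n l1 l2 bf + oscar n l1 l2 cf) / 2 := by
  unfold oscar
  have habs : ∀ i, |(bf i + cf i) / 2| ≤ (|bf i| + |cf i|) / 2 := by
    intro i
    rw [abs_div]
    simp only [abs_two]
    exact div_le_div_of_nonneg_right (abs_add_le _ _) (by norm_num) |>.trans_eq rfl
  have hA : ∑ i, |(bf i + cf i) / 2| ≤ (∑ i, |bf i| + ∑ i, |cf i|) / 2 := by
    have e : (∑ i, |bf i| + ∑ i, |cf i|) / 2 = ∑ i, (|bf i| + |cf i|) / 2 := by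
      rw [← Finset.sum_add_distrib, Finset.sum_div]
    rw [e]
    exact Finset.sum_le_sum fun i _ => habs i
  have hB : ∑ p ∈ Finset.univ.filter (fun p : Fin n × Fin n => p.1 < p.2),
        max |(bf p.1 + cf p.1) / 2| |(bf p.2 + cf p.2) / 2| ≤
      (∑ p ∈ Finset.univ.filter (fun p : Fin n × Fin n => p.1 < p.2), max |bf p.1| |bf p.2| +
       ∑ p ∈ Finset.univ.filter (fun p : Fin n × Fin n => p.1 < p.2), max |cf p.1| |cf p.2|) / 2 := by
    have e : (∑ p ∈ Finset.univ.filter (fun p : Fin n × Fin n => p.1 < p.2), max |bf p.1| |bf p.2| +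
       ∑ p ∈ Finset.univ.filter (fun p : Fin n × Fin n => p.1 < p.2), max |cf p.1| |cf p.2|) / 2 =
        ∑ p ∈ Finset.univ.filter (fun p : Fin n × Fin n => p.1 < p.2),
          (max |bf p.1| |bf p.2| + max |cf p.1| |cf p.2|) / 2 := by
      rw [← Finset.sum_add_distrib, Finset.sum_div]
    rw [e]
    refine Finset.sum_le_sum fun p _ => ?_
    refine max_le ?_ ?_
    · refine (habs p.1).trans ?_
      have := le_max_left |bf p.1| |bf p.2|
      have := le_max_left |cf p.1| |cf p.2|
      linarith
    · refine (habs p.2).trans ?_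
      have := le_max_right |bf p.1| |bf p.2|
      have := le_max_right |cf p.1| |cf p.2|
      linarith
  have hl1 := mul_le_mul_of_nonneg_left hA h1
  have hl2 := mul_le_mul_of_nonneg_left hB h2
  linarith

/-- The full objective. -/
private noncomputable def obj (n : ℕ) (l1 l2 : ℝ) (v x : Fin n → ℝ) : ℝ :=
  oscar n l1 l2 x + (1/2) * ∑ i, (x i - v i)^2

private lemma obj_midpoint (n : ℕ) (l1 l2 : ℝ) (h1 : 0 ≤ l1) (h2 : 0 ≤ l2)
    (v bf cf : Fin n → ℝ) :
    obj n l1 l2 v (fun i => (bf i + cf i) / 2) ≤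
      (obj n l1 l2 v bf + obj n l1 l2 v cf) / 2 - (1/8) * ∑ i, (bf i - cf i)^2 := by
  unfold obj
  have hq : ∑ i, ((bf i + cf i) / 2 - v i)^2 =
      (∑ i, (bf i - v i)^2 + ∑ i, (cf i - v i)^2) / 2 - (∑ i, (bf i - cf i)^2) / 4 := by
    have e : (∑ i, (bf i - v i)^2 + ∑ i, (cf i - v i)^2) / 2 - (∑ i, (bf i - cf i)^2) / 4 =
        ∑ i, (((bf i - v i)^2 + (cf i - v i)^2) / 2 - (bf i - cf i)^2 / 4) := by
      rw [← Finset.sum_add_distrib, Finset.sum_div, Finset.sum_div, ← Finset.sum_sub_distrib]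
    rw [e]
    exact Finset.sum_congr rfl fun i _ => by ring
  have ho := oscar_midpoint n l1 l2 h1 h2 bf cf
  rw [hq]
  linarith

/-- Uniqueness: if b is a minimizer and c achieves a value ≤ the minimum,
then b = c pointwise. -/
private lemma eq_of_min (n : ℕ) (l1 l2 : ℝ) (h1 : 0 ≤ l1) (h2 : 0 ≤ l2)
    (v bf cf : Fin n → ℝ)
    (hb : ∀ x : Fin n → ℝ, obj n l1 l2 v bf ≤ obj n l1 l2 v x)
    (hc : obj n l1 l2 v cf ≤ obj n l1 l2 v bf) :
    ∀ i, bf i = cf i := by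
  have hm := obj_midpoint n l1 l2 h1 h2 v bf cf
  have hbm := hb (fun i => (bf i + cf i) / 2)
  have hS : ∑ i, (bf i - cf i)^2 ≤ 0 := by linarith
  have hS0 : ∑ i, (bf i - cf i)^2 = 0 :=
    le_antisymm hS (Finset.sum_nonneg fun i _ => sq_nonneg _)
  intro i
  have := (Finset.sum_eq_zero_iff_of_nonneg (fun i _ => sq_nonneg (bf i - cf i))).mp hS0
    i (Finset.mem_univ i)
  have := sq_eq_zero_iff.mp this
  linarith

end Aux

/-- Theorem 2(i): for nonnegative, nonincreasing ṽ, the OSCAR prox is nonincreasing,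
nonnegative, and equal entries of ṽ give equal entries of b. -/
theorem oscar_prox_sorted (n : ℕ) (l1 l2 : ℝ) (h1 : 0 ≤ l1) (h2 : 0 ≤ l2)
    (v b : Fin n → ℝ) (hv0 : ∀ i, 0 ≤ v i)
    (hvsorted : ∀ i j : Fin n, i ≤ j → v j ≤ v i)
    (hb : ∀ x : Fin n → ℝ,
      oscar n l1 l2 b + (1/2) * ∑ i, (b i - v i)^2 ≤
        oscar n l1 l2 x + (1/2) * ∑ i, (x i - v i)^2) :
    (∀ i j : Fin n, i ≤ j → b j ≤ b i) ∧ (∀ i, 0 ≤ b i) ∧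
      (∀ p q : Fin n, v p = v q → b p = b q) := by
  have hb' : ∀ x : Fin n → ℝ, obj n l1 l2 v b ≤ obj n l1 l2 v x := fun x => hb x
  -- The swap computation
  have hswap : ∀ i j : Fin n, i ≠ j →
      obj n l1 l2 v (b ∘ Equiv.swap i j) =
        obj n l1 l2 v b + (v i - v j) * (b i - b j) := by
    intro i j hij
    unfold obj
    rw [oscar_comp]
    have hre : ∑ k, ((b ∘ Equiv.swap i j) k - v k)^2 =
        ∑ k, (b k - v (Equiv.swap i j k))^2 := by
      rw [← Equiv.sum_comp (Equiv.swap i j) (fun k => (b k - v (Equiv.swap i j k))^2)]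
      refine Finset.sum_congr rfl fun k _ => ?_
      simp [Equiv.swap_apply_self]
    rw [hre]
    have hdiff : ∑ k, (b k - v (Equiv.swap i j k))^2 =
        ∑ k, ((b k - v k)^2 + ((v (Equiv.swap i j k) - v k) * (v (Equiv.swap i j k) + v k - 2 * b k))) := by
      exact Finset.sum_congr rfl fun k _ => by ring
    rw [hdiff, Finset.sum_add_distrib]
    have hz : ∑ k, ((v (Equiv.swap i j k) - v k) * (v (Equiv.swap i j k) + v k - 2 * b k)) =
        2 * ((v i - v j) * (b i - b j)) := by
      rw [← Finset.sum_subset (Finset.subset_univ ({i, j} : Finset (Fin n)))]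
      · rw [Finset.sum_pair hij]
        rw [Equiv.swap_apply_left, Equiv.swap_apply_right]
        ring
      · intro k _ hk
        simp only [Finset.mem_insert, Finset.mem_singleton, not_or] at hk
        rw [Equiv.swap_apply_of_ne_of_ne hk.1 hk.2]
        ring
    rw [hz]
    ring
  -- consequence: product nonneg
  have hprod : ∀ i j : Fin n, i ≠ j → 0 ≤ (v i - v j) * (b i - b j) := by
    intro i j hij
    have := hb' (b ∘ Equiv.swap i j)
    rw [hswap i j hij] at this
    linarith
  -- equal v entries give equal b entries
  have heq : ∀ p q : Fin n, v p = v q → b p = b q := by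
    intro p q hpq
    by_cases hpqne : p = q
    · rw [hpqne]
    · have hE : obj n l1 l2 v (b ∘ Equiv.swap p q) = obj n l1 l2 v b := by
        rw [hswap p q hpqne, hpq]; ring
      have := eq_of_min n l1 l2 h1 h2 v b (b ∘ Equiv.swap p q) hb' (le_of_eq hE) p
      rw [this]
      simp [Equiv.swap_apply_left]
  refine ⟨?_, ?_, heq⟩
  · intro i j hij
    by_cases hij' : i = j
    · rw [hij']
    · rcases eq_or_lt_of_le (hvsorted i j hij) with hv | hv
      · exact (heq j i hv).le
      · have := hprod i j hij'
        nlinarith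
  · intro i
    have hF : obj n l1 l2 v (fun k => |b k|) ≤ obj n l1 l2 v b := by
      unfold obj
      rw [oscar_abs]
      have : ∑ k, (|b k| - v k)^2 ≤ ∑ k, (b k - v k)^2 := by
        refine Finset.sum_le_sum fun k _ => ?_
        nlinarith [le_abs_self (b k), sq_abs (b k), hv0 k]
      linarith
    have := eq_of_min n l1 l2 h1 h2 v b (fun k => |b k|) hb' hF i
    rw [this]
    exact abs_nonneg _
end

section
/- Suppose ṽ ∈ ℝⁿ is sorted by nonincreasing magnitude and satisfies the gap condition |ṽᵢ| − |ṽ_{i+1}| ≥ λ₂ for all i = 1,…,n−1. Let u*ᵢ = sign(ṽᵢ)·max{|ṽᵢ| − wᵢ, 0} with wᵢ = λ₁ + λ₂(n − i), λ₁, λ₂ ≥ 0. Then u* is the proximity operator of the OSCAR regularizer at ṽ, i.e., u* minimizes r(x) + (1/2)‖x − ṽ‖₂². -/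
open Finset

lemma pair_sum_fst (n : ℕ) (f : Fin n → ℝ) :
    ∑ p ∈ Finset.univ.filter (fun p : Fin n × Fin n => p.1 < p.2), f p.1
      = ∑ i : Fin n, ((n - 1 - (i:ℕ) : ℕ) : ℝ) * f i := by
  rw [Finset.sum_filter, Fintype.sum_prod_type]
  refine Finset.sum_congr rfl fun i _ => ?_
  have : ∑ j : Fin n, (if i < j then f i else 0)
      = ∑ j ∈ Finset.univ.filter (fun j => i < j), f i := (Finset.sum_filter _ _).symm
  rw [this, Finset.sum_const, Finset.filter_lt_eq_Ioi, Fin.card_Ioi, nsmul_eq_mul]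

lemma onedim (w a t : ℝ) (hw : 0 ≤ w) :
    w * max (|a| - w) 0 + (1/2) * ((if 0 ≤ a then (1:ℝ) else -1) * max (|a| - w) 0 - a)^2
      ≤ w * |t| + (1/2) * (t - a)^2 := by
  by_cases h0 : 0 ≤ a
  · rw [if_pos h0, abs_of_nonneg h0, one_mul]
    rcases le_or_gt (a - w) 0 with h | h
    · rw [max_eq_right h]
      have h1 : a ≤ w := by linarith
      nlinarith [mul_nonneg (sub_nonneg.2 h1) (abs_nonneg t),
        mul_nonneg h0 (sub_nonneg.2 (le_abs_self t)), sq_nonneg t]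
    · rw [max_eq_left h.le]
      nlinarith [sq_nonneg (w + t - a), mul_nonneg hw (sub_nonneg.2 (le_abs_self t))]
  · push_neg at h0
    rw [if_neg (not_le.2 h0), abs_of_neg h0]
    rcases le_or_gt (-a - w) 0 with h | h
    · rw [max_eq_right h]
      have h1 : -a ≤ w := by linarith
      nlinarith [mul_nonneg (sub_nonneg.2 h1) (abs_nonneg t),
        mul_nonneg (neg_nonneg.2 h0.le) (sub_nonneg.2 (neg_abs_le t)), sq_nonneg t]
    · rw [max_eq_left h.le]
      nlinarith [sq_nonneg (t - a - w), mul_nonneg hw (sub_nonneg.2 (neg_abs_le t))]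

/-- Under the gap condition, componentwise soft thresholding with weights
wᵢ = λ₁ + λ₂(n − i) gives the OSCAR proximity operator at ṽ. -/
theorem oscar_prox_under_gap (n : ℕ) (l1 l2 : ℝ) (h1 : 0 ≤ l1) (h2 : 0 ≤ l2)
    (v : Fin n → ℝ)
    (hsorted : ∀ i j : Fin n, i ≤ j → |v j| ≤ |v i|)
    (hgap : ∀ i : ℕ, (h : i + 1 < n) → l2 ≤ |v ⟨i, Nat.lt_of_succ_lt h⟩| - |v ⟨i+1, h⟩|) :
    ∀ x : Fin n → ℝ,
      oscar n l1 l2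
          (fun i => (if 0 ≤ v i then (1:ℝ) else -1) *
            max (|v i| - (l1 + l2 * ((n : ℝ) - 1 - (i : ℕ)))) 0) +
        (1/2) * ∑ i, ((if 0 ≤ v i then (1:ℝ) else -1) *
            max (|v i| - (l1 + l2 * ((n : ℝ) - 1 - (i : ℕ)))) 0 - v i)^2 ≤
      oscar n l1 l2 x + (1/2) * ∑ i, (x i - v i)^2 := by
  intro x
  set W : Fin n → ℝ := fun i => l1 + l2 * ((n : ℝ) - 1 - (i : ℕ)) with hWdef
  set A : Fin n → ℝ := fun i => max (|v i| - W i) 0 with hAdef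
  set u : Fin n → ℝ := fun i => (if 0 ≤ v i then (1:ℝ) else -1) * A i with hudef
  -- weights are nonneg
  have hcast : ∀ i : Fin n, ((n - 1 - (i:ℕ) : ℕ) : ℝ) = (n : ℝ) - 1 - (i : ℕ) := by
    intro i
    have h1n : 1 ≤ n := Nat.one_le_iff_ne_zero.2 (by rintro rfl; exact i.elim0)
    have hi : (i : ℕ) ≤ n - 1 := by omega
    push_cast [Nat.sub_sub, Nat.cast_sub (by omega : 1 + (i:ℕ) ≤ n)]
    ring
  have hW : ∀ i, 0 ≤ W i := by
    intro i
    have := hcast i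
    have : (0:ℝ) ≤ (n : ℝ) - 1 - (i : ℕ) := by
      rw [← hcast i]; positivity
    simp only [hWdef]
    nlinarith
  -- |u i| = A i
  have hA0 : ∀ i, 0 ≤ A i := fun i => le_max_right _ _
  have habsu : ∀ i, |u i| = A i := by
    intro i
    simp only [hudef]
    rw [abs_mul]
    split_ifs <;> simp [abs_of_nonneg (hA0 i)]
  -- A is "antitone"
  have hAanti : ∀ i j : Fin n, i ≤ j → A j ≤ A i := by
    intro i j hij
    set g : ℕ → ℝ := fun k => if h : k < n then A ⟨k, h⟩ else 0 with hgdef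
    have hg : Antitone g := by
      apply antitone_nat_of_succ_le
      intro k
      simp only [hgdef]
      by_cases hk1 : k + 1 < n
      · rw [dif_pos hk1, dif_pos (Nat.lt_of_succ_lt hk1)]
        have hgap' := hgap k hk1
        have hWstep : W ⟨k, Nat.lt_of_succ_lt hk1⟩ - W ⟨k+1, hk1⟩ = l2 := by
          simp only [hWdef]; push_cast; ring
        apply max_le_max _ le_rfl
        linarith [hgap', hWstep]
      · rw [dif_neg hk1]
        by_cases hk : k < n
        · rw [dif_pos hk]; exact hA0 _
        · rw [dif_neg hk]
    have h1 : g i = A i := by simp [hgdef, i.isLt]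
    have h2 : g j = A j := by simp [hgdef, j.isLt]
    rw [← h1, ← h2]
    exact hg hij
  -- oscar u = ∑ W i * A i
  have hosc_u : oscar n l1 l2 u = ∑ i, W i * A i := by
    unfold oscar
    have hmax : ∀ p ∈ Finset.univ.filter (fun p : Fin n × Fin n => p.1 < p.2),
        max |u p.1| |u p.2| = |u p.1| := by
      intro p hp
      simp only [Finset.mem_filter] at hp
      rw [habsu, habsu]
      exact max_eq_left (hAanti _ _ hp.2.le)
    rw [Finset.sum_congr rfl hmax, pair_sum_fst n (fun i => |u i|)]
    have : ∀ i, |u i| = A i := habsu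
    simp only [this, hcast]
    rw [Finset.mul_sum, Finset.mul_sum, ← Finset.sum_add_distrib]
    refine Finset.sum_congr rfl fun i _ => ?_
    simp only [hWdef]; ring
  -- oscar x ≥ ∑ W i * |x i|
  have hosc_x : ∑ i, W i * |x i| ≤ oscar n l1 l2 x := by
    unfold oscar
    have hge : ∑ p ∈ Finset.univ.filter (fun p : Fin n × Fin n => p.1 < p.2), |x p.1|
        ≤ ∑ p ∈ Finset.univ.filter (fun p : Fin n × Fin n => p.1 < p.2), max |x p.1| |x p.2| :=
      Finset.sum_le_sum fun p _ => le_max_left _ _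
    calc ∑ i, W i * |x i|
        = l1 * ∑ i, |x i| + l2 * ∑ p ∈ Finset.univ.filter
            (fun p : Fin n × Fin n => p.1 < p.2), |x p.1| := by
          rw [pair_sum_fst n (fun i => |x i|)]
          simp only [hcast]
          rw [Finset.mul_sum, Finset.mul_sum, ← Finset.sum_add_distrib]
          refine Finset.sum_congr rfl fun i _ => ?_
          simp only [hWdef]; ring
      _ ≤ _ := by
          have := mul_le_mul_of_nonneg_left hge h2
          linarith
  -- combine
  have hstep : ∑ i, W i * A i + (1/2) * ∑ i, (u i - v i)^2
      ≤ ∑ i, W i * |x i| + (1/2) * ∑ i, (x i - v i)^2 := by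
    rw [Finset.mul_sum, Finset.mul_sum, ← Finset.sum_add_distrib, ← Finset.sum_add_distrib]
    refine Finset.sum_le_sum fun i _ => ?_
    have := onedim (W i) (v i) (x i) (hW i)
    simp only [hudef, hAdef] at *
    linarith
  calc oscar n l1 l2 u + (1/2) * ∑ i, (u i - v i)^2
      = ∑ i, W i * A i + (1/2) * ∑ i, (u i - v i)^2 := by rw [hosc_u]
    _ ≤ ∑ i, W i * |x i| + (1/2) * ∑ i, (x i - v i)^2 := hstep
    _ ≤ oscar n l1 l2 x + (1/2) * ∑ i, (x i - v i)^2 := by linarith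
end
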